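/- If H is a finitely generated residually free group, then the center Z(H) is finitely generated; in fact the abelianization map H → H_ab is injective on Z(H). -/

import Mathlib

open FreeGroup in
lemma core_word {β : Type} [DecidableEq β] (c : FreeGroup β) {b x : β} {s : Bool}
    {T : List (β × Bool)} (hL : c.toWord = (x, s) :: T) (hbx : b ≠ x)
    (h : c * FreeGroup.of b = FreeGroup.of b * c) : False := by
  have hred : reduce c.toWord = c.toWord := reduce_toWord c
  have hc : c = mk c.toWord := (mk_toWord).symm
  have hob : FreeGroup.of b = mk [(b, true)] := rfl
  rw [hc, hob, mul_mk, mul_mk] at h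
  have h2 : reduce (c.toWord ++ [(b, true)]) = reduce ((b, true) :: c.toWord) :=
    reduce.sound h
  have h3 : reduce ((b, true) :: c.toWord) = (b, true) :: c.toWord := by
    rw [reduce.cons, hred, hL]
    simp [hbx]
  rw [h3] at h2
  have h4 : FreeGroup.Red (c.toWord ++ [(b, true)]) ((b, true) :: c.toWord) := by
    rw [← h2]; exact reduce.red
  have h5 : (b, true) :: c.toWord = c.toWord ++ [(b, true)] := by
    refine h4.sublist.eq_of_length ?_
    simp
  rw [hL] at h5
  simp at h5
  exact hbx h5.1.1

open FreeGroup in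
lemma central_eq_gen {β : Type} (c : FreeGroup β) (hc : c ≠ 1)
    (hcent : ∀ d : FreeGroup β, c * d = d * c) (b b' : β) : b = b' := by
  classical
  have hnil : c.toWord ≠ [] := fun h => hc (FreeGroup.toWord_eq_nil_iff.mp h)
  obtain ⟨⟨x, s⟩, T, hL⟩ := List.exists_cons_of_ne_nil hnil
  have hb : b = x := by
    by_contra hbx
    exact core_word c hL hbx (hcent _)
  have hb' : b' = x := by
    by_contra hbx
    exact core_word c hL hbx (hcent _)
  rw [hb, hb']

lemma comm_of_gens {β : Type} (h : ∀ b b' : β, b = b') (z w : FreeGroup β) :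
    Commute z w := by
  have key : ∀ w z : FreeGroup β, Commute z w := by
    intro w
    induction w using FreeGroup.induction_on with
    | C1 => exact fun z => Commute.one_right z
    | of a =>
      intro z
      induction z using FreeGroup.induction_on with
      | C1 => exact Commute.one_left _
      | of a' => rw [h a' a]
      | inv_of a' ih => exact ih.inv_left
      | mul u v hu hv => exact hu.mul_left hv
    | inv_of a ih => exact fun z => (ih z).inv_right
    | mul u v hu hv => exact fun z => (hu z).mul_right (hv z)
  exact key w z

/-- If `H` is a finitely generated residually free group, then its center is
finitely generated; in fact the abelianization map is injective on the
center. -/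
theorem stmt_6 {H : Type*} [Group H] [Group.FG H]
    (hres : ∀ g : H, g ≠ 1 → ∃ (α : Type) (f : H →* FreeGroup α), f g ≠ 1) :
    (Subgroup.center H).FG ∧
      ∀ x ∈ Subgroup.center H, Abelianization.of x = 1 → x = 1 := by
  classical
  have key : ∀ x ∈ Subgroup.center H, Abelianization.of x = 1 → x = 1 := by
    intro x hx hab
    by_contra hx1
    obtain ⟨α, f, hf⟩ := hres x hx1
    set K := f.range with hK
    let e : K ≃* FreeGroup (IsFreeGroup.Generators K) := IsFreeGroup.toFreeGroup K
    have hxcomm : ∀ g : H, g * x = x * g := Subgroup.mem_center_iff.mp hx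
    let k : K := ⟨f x, ⟨x, rfl⟩⟩
    have hkcent : ∀ u : K, k * u = u * k := by
      rintro ⟨-, g, rfl⟩
      apply Subtype.ext
      show f x * f g = f g * f x
      rw [← map_mul, ← map_mul, ← hxcomm g]
    have hk1 : k ≠ 1 := by
      intro h
      exact hf (by simpa [k, Subtype.ext_iff] using h)
    have hc1 : e k ≠ 1 := by
      intro h
      exact hk1 (e.injective (by rw [h, map_one]))
    have hccent : ∀ d : FreeGroup (IsFreeGroup.Generators K), e k * d = d * e k := by
      intro d
      have h := hkcent (e.symm d)
      calc e k * d = e (k * e.symm d) := by rw [map_mul, e.apply_symm_apply]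
        _ = e (e.symm d * k) := by rw [h]
        _ = d * e k := by rw [map_mul, e.apply_symm_apply]
    have hgen : ∀ b b' : IsFreeGroup.Generators K, b = b' :=
      central_eq_gen (e k) hc1 hccent
    have hKcomm : ∀ u v : K, u * v = v * u := by
      intro u v
      apply e.injective
      rw [map_mul, map_mul, (comm_of_gens hgen (e u) (e v)).eq]
    have hker : commutator H ≤ f.ker := by
      rw [commutator_def, Subgroup.commutator_le]
      intro g _ h _
      rw [MonoidHom.mem_ker, map_commutatorElement]
      refine commutatorElement_eq_one_iff_commute.mpr ?_
      exact Subtype.ext_iff.mp (hKcomm ⟨f g, ⟨g, rfl⟩⟩ ⟨f h, ⟨h, rfl⟩⟩)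
    have hxmem : x ∈ commutator H := (QuotientGroup.eq_one_iff x).mp hab
    exact hf (hker hxmem)
  refine ⟨?_, key⟩
  let φ : Subgroup.center H →* Abelianization H :=
    Abelianization.of.comp (Subgroup.center H).subtype
  have hinj : Function.Injective φ := by
    refine (injective_iff_map_eq_one φ).mpr ?_
    intro a ha
    exact Subtype.ext (key a.1 a.2 ha)
  have hsurj : Function.Surjective (Abelianization.of (G := H)) :=
    fun b => Quotient.inductionOn' b fun g => ⟨g, rfl⟩
  haveI hAfg : Group.FG (Abelianization H) := Group.fg_of_surjective hsurj
  haveI h1 : AddGroup.FG (Additive (Abelianization H)) := GroupFG.iff_add_fg.mp hAfg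
  haveI h2 : Module.Finite ℤ (Additive (Abelianization H)) :=
    Module.Finite.iff_addGroup_fg.mpr h1
  haveI h3 : IsNoetherian ℤ (Additive (Abelianization H)) :=
    isNoetherian_of_isNoetherianRing_of_finite ℤ _
  have hPfg : (φ.range).FG := by
    have hS : ((φ.range).toAddSubgroup).FG := by
      have := IsNoetherian.noetherian (AddSubgroup.toIntSubmodule ((φ.range).toAddSubgroup))
      rwa [Submodule.fg_iff_addSubgroup_fg, AddSubgroup.toIntSubmodule_toAddSubgroup] at this
    exact (Subgroup.fg_iff_add_fg φ.range).mpr hS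
  haveI : Group.FG φ.range := (Group.fg_iff_subgroup_fg φ.range).mpr hPfg
  have : Group.FG (Subgroup.center H) :=
    Group.fg_of_surjective (f := (MonoidHom.ofInjective hinj).symm.toMonoidHom)
      (MonoidHom.ofInjective hinj).symm.surjective
  exact (Group.fg_iff_subgroup_fg (Subgroup.center H)).mp this
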